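/- The generating functions satisfy (1 + U) · W_1 = V_1 · U in ℚ[[x, y_1, …, y_m]]. -/

import Mathlib

/-- A block: a rectangle of width `width` and height 1, whose leftmost cell is in
column `left` and whose row is `height`. -/
structure Blk where
  left : ℤ
  height : ℕ
  width : ℕ
deriving DecidableEq

/-- The set of columns occupied by a block. -/
def Blk.colsSet (b : Blk) : Set ℤ := Set.Ico b.left (b.left + b.width)

/-- The set of cells occupied by a block. -/
def Blk.cells (b : Blk) : Set (ℤ × ℕ) := b.colsSet ×ˢ ({b.height} : Set ℕ)

/-- The blocks of a configuration occupy pairwise disjoint cells. -/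
def disjointCells (T : Finset Blk) : Prop :=
  (T : Set Blk).Pairwise fun a b => Disjoint a.cells b.cells

/-- Every block at height `h + 1` shares a column with some block at height `h`. -/
def supported (T : Finset Blk) : Prop :=
  ∀ b ∈ T, ∀ h : ℕ, b.height = h + 1 →
    ∃ b' ∈ T, b'.height = h ∧ ∃ x : ℤ, x ∈ b.colsSet ∧ x ∈ b'.colsSet

/-- The set of columns occupied by the blocks of `T` at height `h`. -/
def colsAt (T : Finset Blk) (h : ℕ) : Set ℤ :=
  {x | ∃ b ∈ T, b.height = h ∧ x ∈ b.colsSet}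

/-- All blocks have widths from the list `s`. -/
def widthsOK {m : ℕ} (s : Fin m → ℕ) (T : Finset Blk) : Prop :=
  ∀ b ∈ T, ∃ i, b.width = s i

/-- An `S`-omino tower (normalized representative of its horizontal-translation class):
widths from `s`, pairwise disjoint cells, every block above the bottom row supported,
and the columns occupied at height 0 form a nonempty interval starting at column 0
(the normalization picking one representative per translation class). -/
def IsTower {m : ℕ} (s : Fin m → ℕ) (T : Finset Blk) : Prop :=
  widthsOK s T ∧ disjointCells T ∧ supported T ∧
    ∃ hi : ℤ, 0 ≤ hi ∧ colsAt T 0 = Set.Icc 0 hi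

/-- The number of blocks of width `w` in `T`. -/
def countW (T : Finset Blk) (w : ℕ) : ℕ := (T.filter fun b => b.width = w).card

/-- The number of blocks in the bottom row of `T`. -/
def bottomCount (T : Finset Blk) : ℕ := (T.filter fun b => b.height = 0).card

/-- A configuration over a platform occupying columns `{0, …, ℓ−1}` at height `-1`:
a finite (possibly empty) collection of pairwise disjoint blocks with widths from `s`,
every block at height `h ≥ 1` sharing a column with some block at height `h−1`, and
every block at height `0` sharing a column with the platform.  Such configurations are
not identified up to translation. -/
def IsConfig {m : ℕ} (s : Fin m → ℕ) (ℓ : ℕ) (T : Finset Blk) : Prop :=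
  widthsOK s T ∧ disjointCells T ∧ supported T ∧
    ∀ b ∈ T, b.height = 0 → ∃ x : ℤ, x ∈ b.colsSet ∧ 0 ≤ x ∧ x < (ℓ : ℤ)

/-- No block occupies any column `< 0`. -/
def leftFree (T : Finset Blk) : Prop := ∀ b ∈ T, 0 ≤ b.left

/-- The generating function of a class `P` of configurations in `ℚ[[x, y_1, …, y_m]]`
(variable `none` is `x`; variable `some i` is `y_i`): the coefficient of the monomial
`x^n y_1^{d_1} ⋯ y_m^{d_m}` is the number of configurations `T` with `P T`, `n` blocks
in total and `d_i` blocks of width `s_i` for each `i`, i.e. the sum of the weights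
`∏_i (x y_i)^{n_i(T)}` over all `T` with `P T`. -/
noncomputable def gf {m : ℕ} (s : Fin m → ℕ) (P : Finset Blk → Prop) :
    MvPowerSeries (Option (Fin m)) ℚ :=
  fun d => (Nat.card {T : Finset Blk // P T ∧ T.card = d none ∧
    ∀ i, countW T (s i) = d (some i)} : ℚ)

/-- `W_b`: generating function of `S`-omino towers with exactly `b` blocks in the bottom
row (towers identified up to translation via the normalized representative). -/
noncomputable def Wgf {m : ℕ} (s : Fin m → ℕ) (b : ℕ) : MvPowerSeries (Option (Fin m)) ℚ :=
  gf s fun T => IsTower s T ∧ bottomCount T = b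

/-- `U`: generating function of towers in `𝒲₁` having no block in any column strictly to
the left of the left end of the bottom block (which sits at column 0). -/
noncomputable def Ugf {m : ℕ} (s : Fin m → ℕ) : MvPowerSeries (Option (Fin m)) ℚ :=
  gf s fun T => IsTower s T ∧ bottomCount T = 1 ∧ leftFree T

/-- `V_ℓ`: generating function of configurations over a platform of width `ℓ`. -/
noncomputable def Vgf {m : ℕ} (s : Fin m → ℕ) (ℓ : ℕ) : MvPowerSeries (Option (Fin m)) ℚ :=
  gf s fun T => IsConfig s ℓ T

/-- `H_ℓ`: generating function of configurations over a platform of width `ℓ` having no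
block in any column strictly to the left of the left end of the platform. -/
noncomputable def Hgf {m : ℕ} (s : Fin m → ℕ) (ℓ : ℕ) : MvPowerSeries (Option (Fin m)) ℚ :=
  gf s fun T => IsConfig s ℓ T ∧ leftFree T

-- ===================== my development =====================
attribute [local instance] Classical.propDecidable

namespace OminoProof

lemma Blk.mem_colsSet {b : Blk} {x : ℤ} :
    x ∈ b.colsSet ↔ b.left ≤ x ∧ x < b.left + b.width := Iff.rfl

/-- two blocks overlap in columns -/
def ov (a b : Blk) : Prop := ∃ x : ℤ, x ∈ a.colsSet ∧ x ∈ b.colsSet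

lemma ov_symm {a b : Blk} (h : ov a b) : ov b a := by
  obtain ⟨x, h1, h2⟩ := h; exact ⟨x, h2, h1⟩

lemma ov_self {b : Blk} (h : 0 < b.width) : ov b b :=
  ⟨b.left, ⟨le_refl _, by omega⟩, ⟨le_refl _, by omega⟩⟩

@[simp] lemma reheight_colsSet (b : Blk) (h : ℕ) :
    (Blk.mk b.left h b.width).colsSet = b.colsSet := rfl

lemma blk_eta (b : Blk) : Blk.mk b.left b.height b.width = b := rfl

/-- from disjointness: overlapping blocks at the same height are equal -/
lemma eq_of_ov_same_height {T : Finset Blk} (hd : disjointCells T)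
    {a b : Blk} (ha : a ∈ T) (hb : b ∈ T) (hov : ov a b)
    (hh : a.height = b.height) : a = b := by
  by_contra hne
  obtain ⟨x, hxa, hxb⟩ := hov
  have := hd ha hb hne
  have hmem : (x, a.height) ∈ a.cells := ⟨hxa, rfl⟩
  have hmem' : (x, a.height) ∈ b.cells := ⟨hxb, by simp [hh]⟩
  exact (Set.disjoint_left.mp this hmem) hmem'

/-- converse: to build `disjointCells` -/
lemma disjointCells_of {T : Finset Blk}
    (h : ∀ a ∈ T, ∀ b ∈ T, a ≠ b → ov a b → a.height ≠ b.height) :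
    disjointCells T := by
  intro a ha b hb hne
  rw [Set.disjoint_left]
  rintro ⟨x, hgt⟩ ⟨hxa, hha⟩ ⟨hxb, hhb⟩
  simp only [Set.mem_singleton_iff] at hha hhb
  exact h a ha b hb hne ⟨x, hxa, hxb⟩ (by omega)

lemma supported_ov {T : Finset Blk} (hs : supported T) {b : Blk} (hb : b ∈ T)
    {h : ℕ} (hh : b.height = h + 1) :
    ∃ a ∈ T, a.height = h ∧ ov a b := by
  obtain ⟨a, ha, hha, x, hx1, hx2⟩ := hs b hb h hh
  exact ⟨a, ha, hha, x, hx2, hx1⟩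

/-- the fundamental "fallen" property: the height of a block in a valid
configuration is the sup of heights+1 of overlapping lower blocks. -/
lemma height_eq_sup {T : Finset Blk} (hd : disjointCells T) (hs : supported T)
    {b : Blk} (hb : b ∈ T) :
    b.height = (T.filter fun a => a.height < b.height ∧ ov a b).sup
      (fun a => a.height + 1) := by
  by_cases hz : b.height = 0
  · rw [hz]
    symm
    apply Nat.eq_zero_of_le_zero
    apply Finset.sup_le
    intro a ha
    rw [Finset.mem_filter] at ha
    omega
  · obtain ⟨h, hn⟩ : ∃ h, b.height = h + 1 := ⟨b.height - 1, by omega⟩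
    apply le_antisymm
    · obtain ⟨a, ha, hha, hov⟩ := supported_ov hs hb hn
      have hmem : a ∈ T.filter fun a => a.height < b.height ∧ ov a b := by
        rw [Finset.mem_filter]; exact ⟨ha, by omega, hov⟩
      have h1 : a.height + 1 ≤ (T.filter fun a => a.height < b.height ∧ ov a b).sup
          (fun a => a.height + 1) := by exact Finset.le_sup (f := fun a => a.height + 1) hmem
      omega
    · apply Finset.sup_le
      intro a ha
      rw [Finset.mem_filter] at ha
      omega


/-- a block is "tainted" if it lies (transitively) above a block sticking out
to the left (column `< 0`). -/
inductive Tainted (T : Finset Blk) : Blk → Prop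
  | base {b : Blk} : b ∈ T → b.left < 0 → Tainted T b
  | step {a b : Blk} : Tainted T a → b ∈ T → a.height < b.height → ov a b → Tainted T b

lemma Tainted.mem {T : Finset Blk} {b : Blk} (h : Tainted T b) : b ∈ T := by
  induction h with
  | base hb _ => exact hb
  | step _ hb _ _ _ => exact hb

noncomputable def Cpart (T : Finset Blk) : Finset Blk := T.filter (Tainted T)
noncomputable def Dpart (T : Finset Blk) : Finset Blk := T.filter fun b => ¬ Tainted T b

lemma mem_Cpart {T : Finset Blk} {b : Blk} : b ∈ Cpart T ↔ Tainted T b := by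
  unfold Cpart
  rw [Finset.mem_filter]
  exact ⟨fun h => h.2, fun h => ⟨h.mem, h⟩⟩

lemma mem_Dpart {T : Finset Blk} {b : Blk} : b ∈ Dpart T ↔ b ∈ T ∧ ¬ Tainted T b := by
  unfold Dpart; rw [Finset.mem_filter]

lemma Dpart_union_Cpart (T : Finset Blk) : Dpart T ∪ Cpart T = T := by
  ext b
  rw [Finset.mem_union, mem_Dpart, mem_Cpart]
  constructor
  · rintro (h | h)
    · exact h.1
    · exact h.mem
  · intro hb
    by_cases ht : Tainted T b
    · exact Or.inr ht
    · exact Or.inl ⟨hb, ht⟩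

lemma Dpart_disj_Cpart (T : Finset Blk) : ∀ b ∈ Dpart T, b ∉ Cpart T := by
  intro b hb hc
  rw [mem_Dpart] at hb
  rw [mem_Cpart] at hc
  exact hb.2 hc

/-- normalized ("fallen") height of a block within the collection `C` -/
noncomputable def nh (C : Finset Blk) (b : Blk) : ℕ :=
  ((C.filter fun a => a.height < b.height ∧ ov a b).attach).sup
    (fun a => nh C a.1 + 1)
termination_by b.height
decreasing_by exact (Finset.mem_filter.mp a.2).2.1

lemma nh_eq_sup (C : Finset Blk) (b : Blk) :
    nh C b = (C.filter fun a => a.height < b.height ∧ ov a b).sup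
      (fun a => nh C a + 1) := by
  rw [nh]
  exact Finset.sup_attach (C.filter fun a => a.height < b.height ∧ ov a b)
    (fun a => nh C a + 1)

lemma nh_lt {C : Finset Blk} {a b : Blk} (ha : a ∈ C) (h1 : a.height < b.height)
    (h2 : ov a b) : nh C a < nh C b := by
  rw [nh_eq_sup C b]
  have hmem : a ∈ C.filter fun a => a.height < b.height ∧ ov a b := by
    rw [Finset.mem_filter]; exact ⟨ha, h1, h2⟩
  have h3 : nh C a + 1 ≤ (C.filter fun a => a.height < b.height ∧ ov a b).sup
      (fun a => nh C a + 1) := by exact Finset.le_sup (f := fun a => nh C a + 1) hmem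
  omega

lemma nh_support {C : Finset Blk} {b : Blk} {k : ℕ} (h : nh C b = k + 1) :
    ∃ a ∈ C, a.height < b.height ∧ ov a b ∧ nh C a = k := by
  rw [nh_eq_sup C b] at h
  have hne : (C.filter fun a => a.height < b.height ∧ ov a b).Nonempty := by
    rcases Finset.eq_empty_or_nonempty (C.filter fun a => a.height < b.height ∧ ov a b) with
      he | hne
    · rw [he] at h; simp at h
    · exact hne
  obtain ⟨a, ha, hsup⟩ := Finset.exists_mem_eq_sup
    (C.filter fun a => a.height < b.height ∧ ov a b) hne (fun a => nh C a + 1)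
  rw [Finset.mem_filter] at ha
  rw [hsup] at h
  change nh C a + 1 = k + 1 at h
  exact ⟨a, ha.1, ha.2.1, ha.2.2, by omega⟩

lemma nh_zero {C : Finset Blk} {b : Blk} (h : nh C b = 0) :
    ∀ a ∈ C, a.height < b.height → ¬ ov a b := by
  intro a ha h1 h2
  have := nh_lt ha h1 h2
  omega

/-- height of a block of `C` after letting `C` fall on top of `D` -/
noncomputable def mh (D C : Finset Blk) (b : Blk) : ℕ :=
  max ((D.filter fun a => ov a b).sup fun a => a.height + 1)
      (((C.filter fun a => a.height < b.height ∧ ov a b).attach).sup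
        fun a => mh D C a.1 + 1)
termination_by b.height
decreasing_by exact (Finset.mem_filter.mp a.2).2.1

lemma mh_eq_sup (D C : Finset Blk) (b : Blk) :
    mh D C b = max ((D.filter fun a => ov a b).sup fun a => a.height + 1)
      ((C.filter fun a => a.height < b.height ∧ ov a b).sup fun a => mh D C a + 1) := by
  rw [mh]
  congr 1
  exact Finset.sup_attach (C.filter fun a => a.height < b.height ∧ ov a b)
    (fun a => mh D C a + 1)

lemma mh_D_lt {D C : Finset Blk} {a b : Blk} (ha : a ∈ D) (h2 : ov a b) :
    a.height < mh D C b := by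
  rw [mh_eq_sup D C b]
  have hmem : a ∈ D.filter fun a => ov a b := by
    rw [Finset.mem_filter]; exact ⟨ha, h2⟩
  have h3 : a.height + 1 ≤ (D.filter fun a => ov a b).sup (fun a => a.height + 1) := by
    exact Finset.le_sup (f := fun a => a.height + 1) hmem
  exact lt_of_lt_of_le (by omega) (le_trans h3 (Nat.le_max_left _ _))

lemma mh_C_lt {D C : Finset Blk} {a b : Blk} (ha : a ∈ C) (h1 : a.height < b.height)
    (h2 : ov a b) : mh D C a < mh D C b := by
  rw [mh_eq_sup D C b]
  have hmem : a ∈ C.filter fun a => a.height < b.height ∧ ov a b := by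
    rw [Finset.mem_filter]; exact ⟨ha, h1, h2⟩
  have h3 : mh D C a + 1 ≤ (C.filter fun a => a.height < b.height ∧ ov a b).sup
      (fun a => mh D C a + 1) := by exact Finset.le_sup (f := fun a => mh D C a + 1) hmem
  exact lt_of_lt_of_le (by omega) (le_trans h3 (Nat.le_max_right _ _))

lemma mh_support {D C : Finset Blk} {b : Blk} {k : ℕ} (h : mh D C b = k + 1) :
    (∃ a ∈ D, ov a b ∧ a.height = k) ∨
      (∃ a ∈ C, a.height < b.height ∧ ov a b ∧ mh D C a = k) := by
  rw [mh_eq_sup D C b] at h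
  rcases max_eq_iff.mp h with ⟨hd, _⟩ | ⟨hc, _⟩
  · left
    have hne : (D.filter fun a => ov a b).Nonempty := by
      rcases Finset.eq_empty_or_nonempty (D.filter fun a => ov a b) with he | hne
      · rw [he] at hd; simp at hd
      · exact hne
    obtain ⟨a, ha, hsup⟩ := Finset.exists_mem_eq_sup
      (D.filter fun a => ov a b) hne (fun a => a.height + 1)
    rw [Finset.mem_filter] at ha
    rw [hsup] at hd
    change a.height + 1 = k + 1 at hd
    exact ⟨a, ha.1, ha.2, by omega⟩
  · right
    have hne : (C.filter fun a => a.height < b.height ∧ ov a b).Nonempty := by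
      rcases Finset.eq_empty_or_nonempty (C.filter fun a => a.height < b.height ∧ ov a b)
        with he | hne
      · rw [he] at hc; simp at hc
      · exact hne
    obtain ⟨a, ha, hsup⟩ := Finset.exists_mem_eq_sup
      (C.filter fun a => a.height < b.height ∧ ov a b) hne (fun a => mh D C a + 1)
    rw [Finset.mem_filter] at ha
    rw [hsup] at hc
    change mh D C a + 1 = k + 1 at hc
    exact ⟨a, ha.1, ha.2.1, ha.2.2, by omega⟩

lemma mh_zero {D C : Finset Blk} {b : Blk} (h : mh D C b = 0) :
    (∀ a ∈ D, ¬ ov a b) ∧ (∀ a ∈ C, a.height < b.height → ¬ ov a b) := by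
  constructor
  · intro a ha hov
    have := mh_D_lt (C := C) ha hov
    omega
  · intro a ha h1 h2
    have := mh_C_lt (D := D) ha h1 h2
    omega

/-- the normalized left factor of the factorization -/
noncomputable def Ctil (T : Finset Blk) : Finset Blk :=
  (Cpart T).image fun b => Blk.mk b.left (nh (Cpart T) b) b.width

/-- merging a left-hanging configuration `C` onto a tower `D` -/
noncomputable def mergeT (D C : Finset Blk) : Finset Blk :=
  D ∪ C.image fun b => Blk.mk b.left (mh D C b) b.width


/-! ## predicates -/

variable {m : ℕ}

def Wpred (s : Fin m → ℕ) (T : Finset Blk) : Prop := IsTower s T ∧ bottomCount T = 1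
def Upred (s : Fin m → ℕ) (T : Finset Blk) : Prop :=
  IsTower s T ∧ bottomCount T = 1 ∧ leftFree T
def Lpred (s : Fin m → ℕ) (T : Finset Blk) : Prop :=
  IsConfig s 1 T ∧ ∀ b ∈ T, b.height = 0 → b.left < 0

lemma width_pos {s : Fin m → ℕ} (hpos : ∀ i, 0 < s i) {T : Finset Blk}
    (hw : widthsOK s T) {b : Blk} (hb : b ∈ T) : 0 < b.width := by
  obtain ⟨i, hi⟩ := hw b hb
  rw [hi]; exact hpos i

lemma zero_mem_of_bottom {b : Blk}
    (hbc : ∃ x : ℤ, x ∈ b.colsSet ∧ 0 ≤ x ∧ x < ((1 : ℕ) : ℤ)) : (0 : ℤ) ∈ b.colsSet := by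
  obtain ⟨x, hx, h0, h1⟩ := hbc
  have : x = 0 := by push_cast at h1; omega
  rwa [this] at hx

/-- bottom block of a `W`-tower -/
lemma Wpred_bottom {s : Fin m → ℕ} (hpos : ∀ i, 0 < s i) {T : Finset Blk}
    (hW : Wpred s T) :
    ∃ b₀ ∈ T, b₀.height = 0 ∧ b₀.left = 0 ∧ 0 < b₀.width ∧
      (∀ b ∈ T, b.height = 0 → b = b₀) ∧ (0:ℤ) ∈ b₀.colsSet := by
  obtain ⟨⟨hw, hd, hs, hi, hi0, hcols⟩, hbc⟩ := hW
  obtain ⟨b₀, hb₀⟩ := Finset.card_eq_one.mp hbc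
  have hb₀T : b₀ ∈ T ∧ b₀.height = 0 := by
    have : b₀ ∈ T.filter fun b => b.height = 0 := by rw [hb₀]; exact Finset.mem_singleton_self _
    rw [Finset.mem_filter] at this; exact this
  have huniq : ∀ b ∈ T, b.height = 0 → b = b₀ := by
    intro b hb hh
    have : b ∈ T.filter fun b => b.height = 0 := by rw [Finset.mem_filter]; exact ⟨hb, hh⟩
    rw [hb₀, Finset.mem_singleton] at this; exact this
  have hcolsb : colsAt T 0 = b₀.colsSet := by
    ext x
    constructor
    · rintro ⟨b, hb, hh, hx⟩
      rwa [huniq b hb hh] at hx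
    · intro hx
      exact ⟨b₀, hb₀T.1, hb₀T.2, hx⟩
  have hwpos : 0 < b₀.width := width_pos hpos hw hb₀T.1
  have hcc : b₀.colsSet = Set.Icc 0 hi := by rw [← hcolsb, hcols]
  have hl : b₀.left ∈ b₀.colsSet := ⟨le_refl _, by omega⟩
  have h0 : (0:ℤ) ∈ b₀.colsSet := by rw [hcc]; exact ⟨le_refl _, hi0⟩
  have hl0 : b₀.left = 0 := by
    rw [hcc] at hl
    have := hl.1
    have := (Blk.mem_colsSet.mp h0).1
    omega
  exact ⟨b₀, hb₀T.1, hb₀T.2, hl0, hwpos, huniq, h0⟩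

/-- trichotomy: a configuration over the width-1 platform is either a
`W`-tower (bottom block starting at 0) or left-hanging. -/
lemma Wpred_iff {s : Fin m → ℕ} (hpos : ∀ i, 0 < s i) {T : Finset Blk} :
    Wpred s T ↔ IsConfig s 1 T ∧ ¬(∀ b ∈ T, b.height = 0 → b.left < 0) := by
  constructor
  · intro hW
    obtain ⟨b₀, hb₀T, hh0, hl0, hwp, huniq, h0⟩ := Wpred_bottom hpos hW
    obtain ⟨⟨hw, hd, hs, _⟩, _⟩ := hW
    refine ⟨⟨hw, hd, hs, ?_⟩, ?_⟩
    · intro b hb hh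
      rw [huniq b hb hh]
      exact ⟨0, h0, le_refl _, by omega⟩
    · push_neg
      exact ⟨b₀, hb₀T, hh0, by omega⟩
  · rintro ⟨⟨hw, hd, hs, hbc⟩, hnb⟩
    push_neg at hnb
    obtain ⟨b₀, hb₀T, hh0, hl0⟩ := hnb
    have h0 : (0:ℤ) ∈ b₀.colsSet := zero_mem_of_bottom (hbc b₀ hb₀T hh0)
    have hl00 : b₀.left = 0 := by
      have := (Blk.mem_colsSet.mp h0).1
      omega
    have hwp : 0 < b₀.width := width_pos hpos hw hb₀T
    have huniq : ∀ b ∈ T, b.height = 0 → b = b₀ := by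
      intro b hb hh
      have h0b : (0:ℤ) ∈ b.colsSet := zero_mem_of_bottom (hbc b hb hh)
      exact eq_of_ov_same_height hd hb hb₀T ⟨0, h0b, h0⟩ (by omega)
    have hfilt : T.filter (fun b => b.height = 0) = {b₀} := by
      apply Finset.eq_singleton_iff_unique_mem.mpr
      constructor
      · rw [Finset.mem_filter]; exact ⟨hb₀T, hh0⟩
      · intro b hb
        rw [Finset.mem_filter] at hb
        exact huniq b hb.1 hb.2
    constructor
    · refine ⟨hw, hd, hs, (b₀.width : ℤ) - 1, by omega, ?_⟩
      ext x
      constructor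
      · rintro ⟨b, hb, hh, hx⟩
        rw [huniq b hb hh] at hx
        obtain ⟨h1, h2⟩ := Blk.mem_colsSet.mp hx
        exact ⟨by omega, by omega⟩
      · rintro ⟨h1, h2⟩
        exact ⟨b₀, hb₀T, hh0, by rw [Blk.mem_colsSet]; omega⟩
    · unfold bottomCount
      rw [hfilt]
      exact Finset.card_singleton _

lemma Upred_iff {s : Fin m → ℕ} (hpos : ∀ i, 0 < s i) {T : Finset Blk} :
    Upred s T ↔ Wpred s T ∧ leftFree T := by
  constructor
  · rintro ⟨h1, h2, h3⟩; exact ⟨⟨h1, h2⟩, h3⟩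
  · rintro ⟨⟨h1, h2⟩, h3⟩; exact ⟨h1, h2, h3⟩

/-! ## the split -/

section Split

variable {s : Fin m → ℕ} {T : Finset Blk}

lemma disjointCells_subset {S T : Finset Blk} (hsub : S ⊆ T) (hd : disjointCells T) :
    disjointCells S := Set.Pairwise.mono (by exact_mod_cast hsub) hd

lemma Cpart_subset : Cpart T ⊆ T := Finset.filter_subset _ _
lemma Dpart_subset : Dpart T ⊆ T := Finset.filter_subset _ _

/-- a `C`-block minimal in `C` sticks out to the left and covers column 0. -/
lemma tainted_min (hconf : IsConfig s 1 T) {b : Blk} (hb : b ∈ Cpart T)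
    (hmin : ∀ a ∈ Cpart T, a.height < b.height → ¬ ov a b) :
    b.left < 0 ∧ (0:ℤ) ∈ b.colsSet := by
  obtain ⟨hw, hd, hs, hbc⟩ := hconf
  have ht : Tainted T b := mem_Cpart.mp hb
  cases ht with
  | step ha hmem hlt hov =>
      exact absurd hov (hmin _ (mem_Cpart.mpr ha) hlt)
  | base hmem hneg =>
      refine ⟨hneg, ?_⟩
      by_cases hz : b.height = 0
      · exact zero_mem_of_bottom (hbc b hmem hz)
      · obtain ⟨h, hn⟩ : ∃ h, b.height = h + 1 := ⟨b.height - 1, by omega⟩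
        obtain ⟨a, haT, hah, hov⟩ := supported_ov hs hmem hn
        have hnt : ¬ Tainted T a := by
          intro hta
          exact hmin a (mem_Cpart.mpr hta) (by omega) hov
        have hal : 0 ≤ a.left := by
          by_contra hneg2
          exact hnt (Tainted.base haT (by omega))
        obtain ⟨x, hxa, hxb⟩ := hov
        rw [Blk.mem_colsSet] at hxa hxb ⊢
        omega

/-- `nh` is strictly monotone w.r.t. height on overlapping blocks of `Cpart T`. -/
lemma nh_lt_iff (hd : disjointCells T) {a b : Blk} (ha : a ∈ Cpart T) (hb : b ∈ Cpart T)
    (hov : ov a b) (hne : a ≠ b) :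
    a.height < b.height ↔ nh (Cpart T) a < nh (Cpart T) b := by
  have hne' : a.height ≠ b.height := fun h =>
    hne (eq_of_ov_same_height hd (Cpart_subset ha) (Cpart_subset hb) hov h)
  constructor
  · intro h; exact nh_lt ha h hov
  · intro h
    by_contra hcon
    have : b.height < a.height := by omega
    have := nh_lt hb this (ov_symm hov)
    omega

lemma split_injOn (hpos : ∀ i, 0 < s i) (hconf : IsConfig s 1 T) :
    Set.InjOn (fun b => Blk.mk b.left (nh (Cpart T) b) b.width) (Cpart T) := by
  obtain ⟨hw, hd, hs, hbc⟩ := hconf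
  intro a ha b hb heq
  simp only [Finset.mem_coe] at ha hb
  by_contra hne
  simp only [Blk.mk.injEq] at heq
  obtain ⟨h1, h3, h2⟩ := heq
  have hwp : 0 < a.width := width_pos hpos hw (Cpart_subset ha)
  have hov : ov a b := by
    refine ⟨a.left, ⟨le_refl _, by omega⟩, ?_⟩
    rw [Blk.mem_colsSet]
    omega
  have hne' : a.height ≠ b.height := fun h =>
    hne (eq_of_ov_same_height hd (Cpart_subset ha) (Cpart_subset hb) hov h)
  rcases Nat.lt_or_ge a.height b.height with hlt | hge
  · have := nh_lt ha hlt hov; omega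
  · have := nh_lt hb (by omega) (ov_symm hov); omega

lemma mem_Ctil {p : Blk} :
    p ∈ Ctil T ↔ ∃ b ∈ Cpart T, Blk.mk b.left (nh (Cpart T) b) b.width = p := by
  unfold Ctil
  rw [Finset.mem_image]

/-- the normalized left part is a left-hanging configuration -/
lemma Lpred_Ctil (hpos : ∀ i, 0 < s i) (hconf : IsConfig s 1 T) : Lpred s (Ctil T) := by
  obtain ⟨hw, hd, hs, hbc⟩ := hconf
  have hC := fun {b} (hb : b ∈ Cpart T) => Cpart_subset (T := T) hb
  refine ⟨⟨?_, ?_, ?_, ?_⟩, ?_⟩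
  · -- widths
    intro p hp
    obtain ⟨b, hb, rfl⟩ := mem_Ctil.mp hp
    exact hw b (hC hb)
  · -- disjoint
    apply disjointCells_of
    rintro p hp q hq hne hov
    obtain ⟨a, ha, rfl⟩ := mem_Ctil.mp hp
    obtain ⟨b, hb, rfl⟩ := mem_Ctil.mp hq
    have hab : a ≠ b := fun h => hne (by rw [h])
    have hovab : ov a b := hov
    have hne' : a.height ≠ b.height := fun h =>
      hab (eq_of_ov_same_height hd (hC ha) (hC hb) hovab h)
    show nh (Cpart T) a ≠ nh (Cpart T) b
    rcases Nat.lt_or_ge a.height b.height with hlt | hge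
    · have := nh_lt ha hlt hovab; omega
    · have := nh_lt hb (by omega) (ov_symm hovab); omega
  · -- supported
    intro p hp k hk
    obtain ⟨b, hb, rfl⟩ := mem_Ctil.mp hp
    have hnh : nh (Cpart T) b = k + 1 := hk
    obtain ⟨a, ha, hlt, hov, hnha⟩ := nh_support hnh
    refine ⟨Blk.mk a.left (nh (Cpart T) a) a.width, ?_, hnha, ?_⟩
    · exact mem_Ctil.mpr ⟨a, ha, rfl⟩
    · obtain ⟨x, hx1, hx2⟩ := hov
      exact ⟨x, hx2, hx1⟩
  · -- bottom
    intro p hp hh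
    obtain ⟨b, hb, rfl⟩ := mem_Ctil.mp hp
    have hnh : nh (Cpart T) b = 0 := hh
    have hmin := nh_zero hnh
    have := tainted_min ⟨hw, hd, hs, hbc⟩ hb (fun a ha h1 h2 => hmin a ha h1 h2)
    exact ⟨0, this.2, le_refl _, by omega⟩
  · -- all bottom blocks stick out left
    intro p hp hh
    obtain ⟨b, hb, rfl⟩ := mem_Ctil.mp hp
    have hnh : nh (Cpart T) b = 0 := hh
    have hmin := nh_zero hnh
    have := tainted_min ⟨hw, hd, hs, hbc⟩ hb (fun a ha h1 h2 => hmin a ha h1 h2)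
    exact this.1

/-- the right part is a left-free configuration -/
lemma Dpart_config (hconf : IsConfig s 1 T) :
    IsConfig s 1 (Dpart T) ∧ leftFree (Dpart T) := by
  obtain ⟨hw, hd, hs, hbc⟩ := hconf
  refine ⟨⟨?_, ?_, ?_, ?_⟩, ?_⟩
  · intro b hb; exact hw b (Dpart_subset hb)
  · exact disjointCells_subset Dpart_subset hd
  · intro b hb h hh
    obtain ⟨b', hb', hh', x, hx1, hx2⟩ := hs b (Dpart_subset hb) h hh
    refine ⟨b', ?_, hh', x, hx1, hx2⟩
    rw [mem_Dpart]
    refine ⟨hb', fun ht => ?_⟩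
    have hbT := (mem_Dpart.mp hb).2
    exact hbT (Tainted.step ht (Dpart_subset hb) (by omega) ⟨x, hx2, hx1⟩)
  · intro b hb hh; exact hbc b (Dpart_subset hb) hh
  · intro b hb
    rw [mem_Dpart] at hb
    by_contra hneg
    exact hb.2 (Tainted.base hb.1 (by omega))

/-- for a tower, the right part is a `U`-tower -/
lemma Upred_Dpart (hpos : ∀ i, 0 < s i) (hW : Wpred s T) : Upred s (Dpart T) := by
  have hconf : IsConfig s 1 T := ((Wpred_iff hpos).mp hW).1
  obtain ⟨b₀, hb₀T, hh0, hl0, hwp, huniq, h0⟩ := Wpred_bottom hpos hW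
  obtain ⟨⟨hwD, hdD, hsD, hbcD⟩, hlf⟩ := Dpart_config hconf
  have hb₀D : b₀ ∈ Dpart T := by
    rw [mem_Dpart]
    refine ⟨hb₀T, fun ht => ?_⟩
    cases ht with
    | base _ hneg => omega
    | step _ _ hlt _ => omega
  have huniqD : ∀ b ∈ Dpart T, b.height = 0 → b = b₀ :=
    fun b hb hh => huniq b (Dpart_subset hb) hh
  refine ⟨⟨hwD, hdD, hsD, (b₀.width : ℤ) - 1, by omega, ?_⟩, ?_, hlf⟩
  · ext x
    constructor
    · rintro ⟨b, hb, hh, hx⟩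
      rw [huniqD b hb hh] at hx
      obtain ⟨h1, h2⟩ := Blk.mem_colsSet.mp hx
      exact ⟨by omega, by omega⟩
    · rintro ⟨h1, h2⟩
      exact ⟨b₀, hb₀D, hh0, by rw [Blk.mem_colsSet]; omega⟩
  · unfold bottomCount
    rw [show (Dpart T).filter (fun b => b.height = 0) = {b₀} from ?_]
    · exact Finset.card_singleton _
    · apply Finset.eq_singleton_iff_unique_mem.mpr
      refine ⟨by rw [Finset.mem_filter]; exact ⟨hb₀D, hh0⟩, fun b hb => ?_⟩
      rw [Finset.mem_filter] at hb
      exact huniqD b hb.1 hb.2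

end Split

/-! ## the merge -/

section Merge

variable {s : Fin m → ℕ} {D C : Finset Blk}

lemma mem_mergeT {p : Blk} :
    p ∈ mergeT D C ↔ p ∈ D ∨ ∃ b ∈ C, Blk.mk b.left (mh D C b) b.width = p := by
  unfold mergeT
  rw [Finset.mem_union, Finset.mem_image]

lemma merge_img_lt (hpos : ∀ i, 0 < s i) (hL : Lpred s C) {a b : Blk}
    (ha : a ∈ C) (hb : b ∈ C) (hov : ov a b) (hne : a ≠ b) :
    a.height < b.height ↔ mh D C a < mh D C b := by
  obtain ⟨⟨hw, hd, hs, hbc⟩, hneg⟩ := hL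
  have hne' : a.height ≠ b.height := fun h => hne (eq_of_ov_same_height hd ha hb hov h)
  constructor
  · intro h; exact mh_C_lt ha h hov
  · intro h
    by_contra hcon
    have := mh_C_lt (D := D) hb (by omega) (ov_symm hov)
    omega

lemma merge_injOn (hpos : ∀ i, 0 < s i) (hL : Lpred s C) :
    Set.InjOn (fun b => Blk.mk b.left (mh D C b) b.width) (C : Set Blk) := by
  obtain ⟨⟨hw, hd, hs, hbc⟩, hneg⟩ := hL
  intro a ha b hb heq
  simp only [Finset.mem_coe] at ha hb
  by_contra hne
  simp only [Blk.mk.injEq] at heq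
  obtain ⟨h1, h3, h2⟩ := heq
  have hwp : 0 < a.width := width_pos hpos hw ha
  have hov : ov a b := by
    refine ⟨a.left, ⟨le_refl _, by omega⟩, ?_⟩
    rw [Blk.mem_colsSet]
    omega
  have hne' : a.height ≠ b.height := fun h => hne (eq_of_ov_same_height hd ha hb hov h)
  rcases Nat.lt_or_ge a.height b.height with hlt | hge
  · have := mh_C_lt (D := D) ha hlt hov; omega
  · have := mh_C_lt (D := D) hb (by omega) (ov_symm hov); omega

/-- a moved block never coincides with a `D` block -/
lemma merge_disj (hpos : ∀ i, 0 < s i) (hU : Upred s D) :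
    ∀ p ∈ D, ∀ b ∈ C, Blk.mk b.left (mh D C b) b.width ≠ p := by
  intro p hp b hb heq
  rw [← heq] at hp
  have hwp : 0 < b.width := by
    have := width_pos hpos hU.1.1 hp
    exact this
  have hov : ov (Blk.mk b.left (mh D C b) b.width) b :=
    ⟨b.left, ⟨le_refl _, by simpa using hwp⟩, ⟨le_refl _, by omega⟩⟩
  have := mh_D_lt (C := C) (b := b) hp hov
  simp at this

/-- every moved block ends up at positive height -/
lemma merge_mh_pos (hpos : ∀ i, 0 < s i) (hU : Upred s D) (hL : Lpred s C)
    {b : Blk} (hb : b ∈ C) : 0 < mh D C b := by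
  obtain ⟨⟨hw, hd, hs, hbc⟩, hneg⟩ := hL
  by_contra hcon
  have h0 : mh D C b = 0 := by omega
  obtain ⟨hD0, hC0⟩ := mh_zero h0
  by_cases hz : b.height = 0
  · obtain ⟨b₀, hb₀D, hh0, hl0, hwp, huniq, hc0⟩ := Wpred_bottom hpos ⟨hU.1, hU.2.1⟩
    have h0b : (0:ℤ) ∈ b.colsSet := zero_mem_of_bottom (hbc b hb hz)
    exact hD0 b₀ hb₀D ⟨0, hc0, h0b⟩
  · obtain ⟨h, hn⟩ : ∃ h, b.height = h + 1 := ⟨b.height - 1, by omega⟩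
    obtain ⟨a, haC, hah, hov⟩ := supported_ov hs hb hn
    exact hC0 a haC (by omega) hov

/-- the merged collection is a `W`-tower -/
lemma Wpred_mergeT (hpos : ∀ i, 0 < s i) (hU : Upred s D) (hL : Lpred s C) :
    Wpred s (mergeT D C) := by
  obtain ⟨⟨hwC, hdC, hsC, hbcC⟩, hnegC⟩ := hL
  obtain ⟨b₀, hb₀D, hh0, hl0, hwp, huniq, hc0⟩ := Wpred_bottom hpos ⟨hU.1, hU.2.1⟩
  obtain ⟨⟨hwD, hdD, hsD, hiD, hi0D, hcolsD⟩, hbcD, hlfD⟩ := hU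
  rw [Wpred_iff hpos]
  have hbot : ∀ p ∈ mergeT D C, p.height = 0 → p = b₀ := by
    intro p hp hh
    rcases mem_mergeT.mp hp with hpD | ⟨b, hb, rfl⟩
    · exact huniq p hpD hh
    · have := merge_mh_pos hpos ⟨⟨hwD, hdD, hsD, hiD, hi0D, hcolsD⟩, hbcD, hlfD⟩
        ⟨⟨hwC, hdC, hsC, hbcC⟩, hnegC⟩ hb
      change mh D C b = 0 at hh
      omega
  constructor
  · refine ⟨?_, ?_, ?_, ?_⟩
    · -- widths
      intro p hp
      rcases mem_mergeT.mp hp with hpD | ⟨b, hb, rfl⟩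
      · exact hwD p hpD
      · exact hwC b hb
    · -- disjoint cells
      apply disjointCells_of
      intro p hp q hq hne hov
      rcases mem_mergeT.mp hp with hpD | ⟨a, ha, rfl⟩ <;>
        rcases mem_mergeT.mp hq with hqD | ⟨b, hb, rfl⟩
      · intro hh; exact hne (eq_of_ov_same_height hdD hpD hqD hov hh)
      · have hlt := mh_D_lt (C := C) (b := b) hpD hov
        intro hh
        change p.height = mh D C b at hh
        omega
      · have hlt := mh_D_lt (C := C) (b := a) hqD (ov_symm hov)
        intro hh
        change mh D C a = q.height at hh
        omega
      · have hab : a ≠ b := fun h => hne (by rw [h])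
        have hovab : ov a b := hov
        have hne' : a.height ≠ b.height := fun h =>
          hab (eq_of_ov_same_height hdC ha hb hovab h)
        show mh D C a ≠ mh D C b
        rcases Nat.lt_or_ge a.height b.height with hlt | hge
        · have := mh_C_lt (D := D) ha hlt hovab; omega
        · have := mh_C_lt (D := D) hb (by omega) (ov_symm hovab); omega
    · -- supported
      intro p hp k hk
      rcases mem_mergeT.mp hp with hpD | ⟨b, hb, rfl⟩
      · obtain ⟨b', hb', hh', x, hx1, hx2⟩ := hsD p hpD k hk
        exact ⟨b', Finset.mem_union_left _ hb', hh', x, hx1, hx2⟩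
      · change mh D C b = k + 1 at hk
        rcases mh_support hk with ⟨a, haD, hov, hah⟩ | ⟨a, haC, hlt, hov, hmh⟩
        · obtain ⟨x, hx1, hx2⟩ := hov
          exact ⟨a, Finset.mem_union_left _ haD, hah, x, hx2, hx1⟩
        · refine ⟨Blk.mk a.left (mh D C a) a.width, ?_, hmh, ?_⟩
          · exact mem_mergeT.mpr (Or.inr ⟨a, haC, rfl⟩)
          · obtain ⟨x, hx1, hx2⟩ := hov
            exact ⟨x, hx2, hx1⟩
    · -- bottom blocks over the platform
      intro p hp hh
      rw [hbot p hp hh]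
      exact ⟨0, hc0, le_refl _, by omega⟩
  · -- some bottom block at column ≥ 0
    push_neg
    refine ⟨b₀, Finset.mem_union_left _ hb₀D, hh0, by omega⟩

/-- heights in the merged tower: `colsAt` at level 0 is that of `D` -/
lemma bottomCount_mergeT (hpos : ∀ i, 0 < s i) (hU : Upred s D) (hL : Lpred s C) :
    bottomCount (mergeT D C) = 1 := (Wpred_mergeT hpos hU hL).2

lemma Upred_mergeT_tower (hpos : ∀ i, 0 < s i) (hU : Upred s D) (hL : Lpred s C) :
    IsTower s (mergeT D C) := (Wpred_mergeT hpos hU hL).1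

end Merge

/-! ## round trips -/

section RoundTrip

variable {s : Fin m → ℕ} {D C : Finset Blk}

lemma tainted_merge_img (hpos : ∀ i, 0 < s i) (hL : Lpred s C) :
    ∀ n b, b ∈ C → b.height = n →
      Tainted (mergeT D C) (Blk.mk b.left (mh D C b) b.width) := by
  obtain ⟨⟨hwC, hdC, hsC, hbcC⟩, hnegC⟩ := hL
  intro n
  induction n using Nat.strong_induction_on with
  | _ n ih =>
    intro b hb hbn
    have hmemE : Blk.mk b.left (mh D C b) b.width ∈ mergeT D C :=
      mem_mergeT.mpr (Or.inr ⟨b, hb, rfl⟩)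
    by_cases hz : b.height = 0
    · exact Tainted.base hmemE (hnegC b hb hz)
    · obtain ⟨h, hn⟩ : ∃ h, b.height = h + 1 := ⟨b.height - 1, by omega⟩
      obtain ⟨a, haC, hah, hov⟩ := supported_ov hsC hb hn
      have hta := ih a.height (by omega) a haC rfl
      refine Tainted.step hta hmemE ?_ ?_
      · show mh D C a < mh D C b
        exact mh_C_lt haC (by omega) hov
      · exact hov

lemma tainted_merge_only (hpos : ∀ i, 0 < s i) (hU : Upred s D) :
    ∀ p, Tainted (mergeT D C) p →
      p ∈ C.image (fun b => Blk.mk b.left (mh D C b) b.width) := by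
  intro p ht
  induction ht with
  | @base b hmem hneg =>
      rcases mem_mergeT.mp hmem with hbD | ⟨c, hc, rfl⟩
      · exact absurd (hU.2.2 b hbD) (by omega)
      · exact Finset.mem_image.mpr ⟨c, hc, rfl⟩
  | @step a b hta hmem hlt hov ih =>
      rcases mem_mergeT.mp hmem with hbD | ⟨c, hc, rfl⟩
      · obtain ⟨b', hb', rfl⟩ := Finset.mem_image.mp ih
        have hlt2 := mh_D_lt (C := C) (b := b') hbD (ov_symm hov)
        change mh D C b' < b.height at hlt
        omega
      · exact Finset.mem_image.mpr ⟨c, hc, rfl⟩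

lemma Cpart_mergeT (hpos : ∀ i, 0 < s i) (hU : Upred s D) (hL : Lpred s C) :
    Cpart (mergeT D C) = C.image (fun b => Blk.mk b.left (mh D C b) b.width) := by
  ext p
  rw [mem_Cpart]
  constructor
  · exact tainted_merge_only hpos hU p
  · intro hp
    obtain ⟨b, hb, rfl⟩ := Finset.mem_image.mp hp
    exact tainted_merge_img hpos hL b.height b hb rfl

lemma Dpart_mergeT (hpos : ∀ i, 0 < s i) (hU : Upred s D) (hL : Lpred s C) :
    Dpart (mergeT D C) = D := by
  ext p
  rw [mem_Dpart]
  constructor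
  · rintro ⟨hpE, hnt⟩
    rcases mem_mergeT.mp hpE with hpD | ⟨b, hb, rfl⟩
    · exact hpD
    · exact absurd (tainted_merge_img hpos hL b.height b hb rfl) hnt
  · intro hpD
    refine ⟨Finset.mem_union_left _ hpD, fun ht => ?_⟩
    obtain ⟨b, hb, hgb⟩ := Finset.mem_image.mp (tainted_merge_only hpos hU p ht)
    exact merge_disj hpos hU p hpD b hb hgb

lemma nh_merge (hpos : ∀ i, 0 < s i) (hU : Upred s D) (hL : Lpred s C) :
    ∀ n b, b ∈ C → b.height = n →
      nh (C.image (fun b => Blk.mk b.left (mh D C b) b.width))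
        (Blk.mk b.left (mh D C b) b.width) = b.height := by
  obtain ⟨⟨hwC, hdC, hsC, hbcC⟩, hnegC⟩ := hL
  intro n
  induction n using Nat.strong_induction_on with
  | _ n ih =>
    intro b hb hbn
    set g := fun b => Blk.mk b.left (mh D C b) b.width with hg
    have hfe : (C.image g).filter
        (fun p => p.height < (g b).height ∧ ov p (g b)) =
        (C.filter fun a => a.height < b.height ∧ ov a b).image g := by
      ext p
      simp only [Finset.mem_filter, Finset.mem_image]
      constructor
      · rintro ⟨⟨a, ha, rfl⟩, h1, h2⟩
        have hov : ov a b := h2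
        have hmhlt : mh D C a < mh D C b := h1
        have hne : a ≠ b := fun heq => by rw [heq] at hmhlt; omega
        exact ⟨a, ⟨ha, (merge_img_lt hpos ⟨⟨hwC, hdC, hsC, hbcC⟩, hnegC⟩
          ha hb hov hne).mpr hmhlt, hov⟩, rfl⟩
      · rintro ⟨a, ⟨ha, h1, h2⟩, rfl⟩
        have hne : a ≠ b := fun heq => by rw [heq] at h1; omega
        refine ⟨⟨a, ha, rfl⟩, ?_, h2⟩
        show mh D C a < mh D C b
        exact (merge_img_lt hpos ⟨⟨hwC, hdC, hsC, hbcC⟩, hnegC⟩ ha hb h2 hne).mp h1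
    rw [nh_eq_sup, hfe, Finset.sup_image]
    have hcong : ((C.filter fun a => a.height < b.height ∧ ov a b).sup
        (fun a => nh (C.image g) (g a) + 1)) =
        ((C.filter fun a => a.height < b.height ∧ ov a b).sup
        (fun a => a.height + 1)) := by
      apply Finset.sup_congr rfl
      intro a ha
      rw [Finset.mem_filter] at ha
      rw [ih a.height (by omega) a ha.1 rfl]
    rw [show ((fun p => nh (C.image g) p + 1) ∘ g) = fun a => nh (C.image g) (g a) + 1
      from rfl, hcong, ← height_eq_sup hdC hsC hb]

lemma Ctil_mergeT (hpos : ∀ i, 0 < s i) (hU : Upred s D) (hL : Lpred s C) :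
    Ctil (mergeT D C) = C := by
  unfold Ctil
  rw [Cpart_mergeT hpos hU hL, Finset.image_image]
  have : ∀ b ∈ C, (fun p => Blk.mk p.left
      (nh (C.image fun b => Blk.mk b.left (mh D C b) b.width) p) p.width)
      ((fun b => Blk.mk b.left (mh D C b) b.width) b) = b := by
    intro b hb
    simp only
    rw [nh_merge hpos hU hL b.height b hb rfl]
  calc C.image _ = C.image id := Finset.image_congr this
    _ = C := Finset.image_id

end RoundTrip

section RoundTrip2

variable {s : Fin m → ℕ} {T : Finset Blk}

lemma mh_split (hpos : ∀ i, 0 < s i) (hW : Wpred s T) :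
    ∀ n b, b ∈ Cpart T → b.height = n →
      mh (Dpart T) (Ctil T) (Blk.mk b.left (nh (Cpart T) b) b.width) = b.height := by
  have hconf : IsConfig s 1 T := ((Wpred_iff hpos).mp hW).1
  obtain ⟨hw, hd, hs, hbc⟩ := hconf
  intro n
  induction n using Nat.strong_induction_on with
  | _ n ih =>
    intro b hb hbn
    set f := fun b => Blk.mk b.left (nh (Cpart T) b) b.width with hf
    have hDfe : (Dpart T).filter (fun a => ov a (f b)) =
        (Dpart T).filter (fun a => a.height < b.height ∧ ov a b) := by
      apply Finset.filter_congr
      intro a haD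
      constructor
      · intro hov
        have hovab : ov a b := hov
        refine ⟨?_, hovab⟩
        by_contra hcon
        have haT : a ∈ T := Dpart_subset haD
        have hbT : b ∈ T := Cpart_subset hb
        have htb : Tainted T b := mem_Cpart.mp hb
        have hnta : ¬ Tainted T a := (mem_Dpart.mp haD).2
        rcases Nat.eq_or_lt_of_le (Nat.le_of_not_lt hcon) with heq | hlt
        · have hab : a = b := eq_of_ov_same_height hd haT hbT hovab heq.symm
          exact (hab ▸ hnta) htb
        · exact hnta (Tainted.step htb haT hlt (ov_symm hovab))
      · intro h
        exact h.2
    have hCfe : (Ctil T).filter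
        (fun p => p.height < (f b).height ∧ ov p (f b)) =
        ((Cpart T).filter fun a => a.height < b.height ∧ ov a b).image f := by
      ext p
      simp only [Finset.mem_filter, Finset.mem_image, mem_Ctil]
      constructor
      · rintro ⟨⟨a, ha, rfl⟩, h1, h2⟩
        have hov : ov a b := h2
        have hnhlt : nh (Cpart T) a < nh (Cpart T) b := h1
        have hne : a ≠ b := fun heq => by rw [heq] at hnhlt; omega
        exact ⟨a, ⟨ha, (nh_lt_iff hd ha hb hov hne).mpr hnhlt, hov⟩, rfl⟩
      · rintro ⟨a, ⟨ha, h1, h2⟩, rfl⟩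
        have hne : a ≠ b := fun heq => by rw [heq] at h1; omega
        refine ⟨⟨a, ha, rfl⟩, ?_, h2⟩
        show nh (Cpart T) a < nh (Cpart T) b
        exact (nh_lt_iff hd ha hb h2 hne).mp h1
    rw [mh_eq_sup, hDfe, hCfe, Finset.sup_image]
    have hcong : (((Cpart T).filter fun a => a.height < b.height ∧ ov a b).sup
        (fun a => mh (Dpart T) (Ctil T) (f a) + 1)) =
        (((Cpart T).filter fun a => a.height < b.height ∧ ov a b).sup
        (fun a => a.height + 1)) := by
      apply Finset.sup_congr rfl
      intro a ha
      rw [Finset.mem_filter] at ha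
      rw [ih a.height (by omega) a ha.1 rfl]
    rw [show ((fun p => mh (Dpart T) (Ctil T) p + 1) ∘ f) =
      fun a => mh (Dpart T) (Ctil T) (f a) + 1 from rfl, hcong]
    have hunion : ((Dpart T).filter fun a => a.height < b.height ∧ ov a b) ∪
        ((Cpart T).filter fun a => a.height < b.height ∧ ov a b) =
        T.filter fun a => a.height < b.height ∧ ov a b := by
      rw [← Finset.filter_union, Dpart_union_Cpart]
    calc max _ _ = (((Dpart T).filter fun a => a.height < b.height ∧ ov a b) ∪
          ((Cpart T).filter fun a => a.height < b.height ∧ ov a b)).sup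
          (fun a => a.height + 1) := (Finset.sup_union).symm
      _ = (T.filter fun a => a.height < b.height ∧ ov a b).sup
          (fun a => a.height + 1) := by rw [hunion]
      _ = b.height := (height_eq_sup hd hs (Cpart_subset hb)).symm

lemma mergeT_split (hpos : ∀ i, 0 < s i) (hW : Wpred s T) :
    mergeT (Dpart T) (Ctil T) = T := by
  set g' := fun p => Blk.mk p.left (mh (Dpart T) (Ctil T) p) p.width with hg'
  set f := fun b => Blk.mk b.left (nh (Cpart T) b) b.width with hf
  have key : ∀ b ∈ Cpart T, (g' ∘ f) b = b := by
    intro b hb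
    show Blk.mk b.left (mh (Dpart T) (Ctil T) (f b)) b.width = b
    rw [show mh (Dpart T) (Ctil T) (f b) = b.height from mh_split hpos hW b.height b hb rfl]
  have himg : (Ctil T).image g' = (Cpart T).image (g' ∘ f) := Finset.image_image
  have himg2 : (Cpart T).image (g' ∘ f) = Cpart T := by
    rw [Finset.image_congr (fun b hb => key b hb)]
    simp
  calc mergeT (Dpart T) (Ctil T) = Dpart T ∪ (Ctil T).image g' := rfl
    _ = Dpart T ∪ Cpart T := by rw [himg, himg2]
    _ = T := Dpart_union_Cpart T

end RoundTrip2

/-! ## weights -/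

section Weights

variable {s : Fin m → ℕ} {T D C : Finset Blk}

lemma disjoint_D_C : Disjoint (Dpart T) (Cpart T) :=
  Finset.disjoint_left.mpr (Dpart_disj_Cpart T)

lemma card_split (hpos : ∀ i, 0 < s i) (hconf : IsConfig s 1 T) :
    (Dpart T).card + (Ctil T).card = T.card := by
  have h1 : (Ctil T).card = (Cpart T).card :=
    Finset.card_image_of_injOn (split_injOn hpos hconf)
  rw [h1, ← Finset.card_union_of_disjoint (disjoint_D_C (T := T)), Dpart_union_Cpart]

lemma countW_split (hpos : ∀ i, 0 < s i) (hconf : IsConfig s 1 T) (w : ℕ) :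
    countW (Dpart T) w + countW (Ctil T) w = countW T w := by
  unfold countW
  have himg : (Ctil T).filter (fun b => b.width = w) =
      ((Cpart T).filter fun b => b.width = w).image
        (fun b => Blk.mk b.left (nh (Cpart T) b) b.width) := by
    ext p
    simp only [Finset.mem_filter, Finset.mem_image, mem_Ctil]
    constructor
    · rintro ⟨⟨b, hb, rfl⟩, hw⟩
      exact ⟨b, ⟨hb, hw⟩, rfl⟩
    · rintro ⟨b, ⟨hb, hw⟩, rfl⟩
      exact ⟨⟨b, hb, rfl⟩, hw⟩
  rw [himg, Finset.card_image_of_injOn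
    ((split_injOn hpos hconf).mono (by exact_mod_cast Finset.filter_subset _ _)),
    ← Finset.card_union_of_disjoint
      (Finset.disjoint_filter_filter (disjoint_D_C (T := T))),
    ← Finset.filter_union, Dpart_union_Cpart]

lemma merge_disjoint_finsets (hpos : ∀ i, 0 < s i) (hU : Upred s D) :
    Disjoint D (C.image fun b => Blk.mk b.left (mh D C b) b.width) := by
  rw [Finset.disjoint_left]
  intro p hp hpi
  obtain ⟨b, hb, hgb⟩ := Finset.mem_image.mp hpi
  exact merge_disj hpos hU p hp b hb hgb

lemma card_merge (hpos : ∀ i, 0 < s i) (hU : Upred s D) (hL : Lpred s C) :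
    (mergeT D C).card = D.card + C.card := by
  unfold mergeT
  rw [Finset.card_union_of_disjoint (merge_disjoint_finsets hpos hU),
    Finset.card_image_of_injOn (merge_injOn hpos hL)]

lemma countW_merge (hpos : ∀ i, 0 < s i) (hU : Upred s D) (hL : Lpred s C) (w : ℕ) :
    countW (mergeT D C) w = countW D w + countW C w := by
  unfold countW mergeT
  rw [Finset.filter_union]
  have himg : ((C.image fun b => Blk.mk b.left (mh D C b) b.width).filter
      (fun b => b.width = w)) =
      ((C.filter fun b => b.width = w).image
        (fun b => Blk.mk b.left (mh D C b) b.width)) := by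
    ext p
    simp only [Finset.mem_filter, Finset.mem_image]
    constructor
    · rintro ⟨⟨b, hb, rfl⟩, hw⟩
      exact ⟨b, ⟨hb, hw⟩, rfl⟩
    · rintro ⟨b, ⟨hb, hw⟩, rfl⟩
      exact ⟨⟨b, hb, rfl⟩, hw⟩
  rw [himg, Finset.card_union_of_disjoint, Finset.card_image_of_injOn
    ((merge_injOn hpos hL).mono (by exact_mod_cast Finset.filter_subset _ _))]
  rw [← himg]
  exact Finset.disjoint_filter_filter (merge_disjoint_finsets hpos hU)

end Weights

/-! ## finiteness -/

section Finiteness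

variable {s : Fin m → ℕ} {T : Finset Blk}

def Wmax (s : Fin m → ℕ) : ℕ := Finset.univ.sup s

lemma width_le (hw : widthsOK s T) {b : Blk} (hb : b ∈ T) : b.width ≤ Wmax s := by
  obtain ⟨i, hi⟩ := hw b hb
  rw [hi]
  exact Finset.le_sup (Finset.mem_univ i)

lemma exists_height (hs : supported T) :
    ∀ k j, (∃ b ∈ T, b.height = j + k) → ∃ a ∈ T, a.height = j := by
  intro k
  induction k with
  | zero =>
      rintro j ⟨b, hb, h⟩
      exact ⟨b, hb, by omega⟩
  | succ k ih =>
      rintro j ⟨b, hb, h⟩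
      obtain ⟨a, ha, hah, _⟩ := supported_ov hs hb (h := j + k) (by omega)
      exact ih j ⟨a, ha, hah⟩

lemma height_lt_card (hs : supported T) {b : Blk} (hb : b ∈ T) : b.height < T.card := by
  have hsub : Finset.range (b.height + 1) ⊆ T.image Blk.height := by
    intro j hj
    rw [Finset.mem_range] at hj
    obtain ⟨a, ha, hah⟩ := exists_height hs (b.height - j) j ⟨b, hb, by omega⟩
    exact Finset.mem_image.mpr ⟨a, ha, hah⟩
  have h1 := Finset.card_le_card hsub
  have h2 := Finset.card_image_le (f := Blk.height) (s := T)
  rw [Finset.card_range] at h1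
  omega

lemma left_bound (hw : widthsOK s T) (hs : supported T)
    (hbc : ∀ b ∈ T, b.height = 0 → ∃ x : ℤ, x ∈ b.colsSet ∧ 0 ≤ x ∧ x < ((1:ℕ) : ℤ)) :
    ∀ n, ∀ b ∈ T, b.height = n →
      -(((n : ℤ) + 1) * ((Wmax s : ℤ) + 1)) ≤ b.left ∧
        b.left ≤ ((n : ℤ) + 1) * ((Wmax s : ℤ) + 1) := by
  intro n
  induction n with
  | zero =>
      intro b hb h0
      have h0c : (0:ℤ) ∈ b.colsSet := zero_mem_of_bottom (hbc b hb h0)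
      rw [Blk.mem_colsSet] at h0c
      have hwle : (b.width : ℤ) ≤ (Wmax s : ℤ) := by
        exact_mod_cast width_le hw hb
      have hK : (0:ℤ) ≤ (Wmax s : ℤ) := by positivity
      have hEq : ((0:ℤ) + 1) * ((Wmax s : ℤ) + 1) = (Wmax s : ℤ) + 1 := by ring
      constructor <;> [skip; skip] <;> push_cast <;> omega
  | succ n ih =>
      intro b hb hbn
      obtain ⟨a, ha, hah, x, hxa, hxb⟩ := supported_ov hs hb (h := n) hbn
      obtain ⟨ih1, ih2⟩ := ih a ha hah
      rw [Blk.mem_colsSet] at hxa hxb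
      have hwa : (a.width : ℤ) ≤ (Wmax s : ℤ) := by exact_mod_cast width_le hw ha
      have hwb : (b.width : ℤ) ≤ (Wmax s : ℤ) := by exact_mod_cast width_le hw hb
      have hK : (0:ℤ) ≤ (Wmax s : ℤ) := by positivity
      have hEq : (((n:ℤ) + 1) + 1) * ((Wmax s : ℤ) + 1) =
          ((n:ℤ) + 1) * ((Wmax s : ℤ) + 1) + ((Wmax s : ℤ) + 1) := by ring
      constructor <;> push_cast <;> omega

lemma finite_config (s : Fin m → ℕ) (n : ℕ) :
    {T : Finset Blk | IsConfig s 1 T ∧ T.card = n}.Finite := by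
  set B : Finset Blk := ((Finset.Icc (-((n : ℤ) * ((Wmax s : ℤ) + 1)))
      ((n : ℤ) * ((Wmax s : ℤ) + 1)))
    ×ˢ (Finset.range n ×ˢ Finset.Iic (Wmax s))).image
      (fun x => Blk.mk x.1 x.2.1 x.2.2) with hBdef
  apply Set.Finite.subset (B.powerset : Finset (Finset Blk)).finite_toSet
  rintro T ⟨⟨hw, hd, hs, hbc⟩, hcard⟩
  rw [Finset.mem_coe, Finset.mem_powerset]
  intro b hb
  have hh : b.height < n := hcard ▸ height_lt_card hs hb
  obtain ⟨hl1, hl2⟩ := left_bound hw hs hbc b.height b hb rfl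
  have hmono : ((b.height : ℤ) + 1) * ((Wmax s : ℤ) + 1) ≤ (n : ℤ) * ((Wmax s : ℤ) + 1) := by
    have h1 : ((b.height : ℤ) + 1) ≤ (n : ℤ) := by exact_mod_cast hh
    have h2 : (0:ℤ) ≤ (Wmax s : ℤ) + 1 := by positivity
    exact mul_le_mul_of_nonneg_right h1 h2
  rw [hBdef]
  apply Finset.mem_image.mpr
  refine ⟨(b.left, b.height, b.width), ?_, rfl⟩
  rw [Finset.mem_product]
  refine ⟨?_, ?_⟩
  · rw [Finset.mem_Icc]
    omega
  · rw [Finset.mem_product]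
    exact ⟨Finset.mem_range.mpr hh, Finset.mem_Iic.mpr (width_le hw hb)⟩

lemma finite_of_imp {p : Finset Blk → Prop} (s : Fin m → ℕ) (n : ℕ)
    (h : ∀ T, p T → IsConfig s 1 T ∧ T.card = n) :
    Finite {T : Finset Blk // p T} := by
  haveI := (finite_config s n).to_subtype
  exact Finite.of_injective
    (fun (x : {T : Finset Blk // p T}) =>
      (⟨x.1, ⟨(h x.1 x.2).1, (h x.1 x.2).2⟩⟩ :
        {T : Finset Blk // T ∈ {T : Finset Blk | IsConfig s 1 T ∧ T.card = n}}))
    (fun a b hab => by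
      apply Subtype.ext
      exact congrArg
        (fun (y : {T : Finset Blk // T ∈ {T : Finset Blk | IsConfig s 1 T ∧ T.card = n}}) =>
          y.1) hab)

end Finiteness

/-! ## weight function and generating function plumbing -/

section GF

variable {s : Fin m → ℕ}

noncomputable def wt (s : Fin m → ℕ) (T : Finset Blk) : Option (Fin m) →₀ ℕ :=
  Finsupp.equivFunOnFinite.symm fun o => o.elim T.card fun i => countW T (s i)

lemma wt_none (T : Finset Blk) : wt s T none = T.card := by
  unfold wt
  rw [Finsupp.coe_equivFunOnFinite_symm]
  rfl

lemma wt_some (T : Finset Blk) (i : Fin m) : wt s T (some i) = countW T (s i) := by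
  unfold wt
  rw [Finsupp.coe_equivFunOnFinite_symm]
  rfl

lemma wt_merge {D C : Finset Blk} (hpos : ∀ i, 0 < s i) (hU : Upred s D)
    (hL : Lpred s C) : wt s (mergeT D C) = wt s D + wt s C := by
  apply Finsupp.ext
  intro a
  rw [Finsupp.add_apply]
  match a with
  | none => rw [wt_none, wt_none, wt_none]; exact card_merge hpos hU hL
  | some i => rw [wt_some, wt_some, wt_some]; exact countW_merge hpos hU hL (s i)

lemma wt_split {T : Finset Blk} (hpos : ∀ i, 0 < s i) (hconf : IsConfig s 1 T) :
    wt s (Dpart T) + wt s (Ctil T) = wt s T := by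
  apply Finsupp.ext
  intro a
  rw [Finsupp.add_apply]
  match a with
  | none => rw [wt_none, wt_none, wt_none]; exact card_split hpos hconf
  | some i => rw [wt_some, wt_some, wt_some]; exact countW_split hpos hconf (s i)

def wtA (s : Fin m → ℕ) (P : Finset Blk → Prop) (e : Option (Fin m) →₀ ℕ) :=
  {T : Finset Blk // P T ∧ wt s T = e}

def wtX (s : Fin m → ℕ) (P Q : Finset Blk → Prop) (d : Option (Fin m) →₀ ℕ) :=
  {p : Finset Blk × Finset Blk // P p.1 ∧ Q p.2 ∧ wt s p.1 + wt s p.2 = d}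

lemma gf_eq_card (P : Finset Blk → Prop) (d : Option (Fin m) →₀ ℕ) :
    gf s P d = (Nat.card (wtA s P d) : ℚ) := by
  show (Nat.card {T : Finset Blk // P T ∧ T.card = d none ∧
    ∀ i, countW T (s i) = d (some i)} : ℚ) = _
  congr 1
  apply Nat.card_congr
  apply Equiv.subtypeEquivRight
  intro T
  constructor
  · rintro ⟨hP, h1, h2⟩
    refine ⟨hP, Finsupp.ext fun a => ?_⟩
    match a with
    | none => rw [wt_none]; exact h1
    | some i => rw [wt_some]; exact h2 i
  · rintro ⟨hP, h⟩
    exact ⟨hP, by rw [← h, wt_none], fun i => by rw [← h, wt_some]⟩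

lemma finite_wtA (P : Finset Blk → Prop) (hP : ∀ T, P T → IsConfig s 1 T)
    (e : Option (Fin m) →₀ ℕ) : Finite (wtA s P e) := by
  apply finite_of_imp s (e none)
  rintro T ⟨hPT, hwt⟩
  exact ⟨hP T hPT, by rw [← hwt, wt_none]⟩

lemma nat_card_sigma {ι : Type*} [Fintype ι] (f : ι → Type*) [∀ i, Finite (f i)] :
    Nat.card (Σ i, f i) = ∑ i, Nat.card (f i) := by
  letI : ∀ i, Fintype (f i) := fun i => Fintype.ofFinite _
  rw [Nat.card_eq_fintype_card, Fintype.card_sigma]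
  exact Finset.sum_congr rfl fun i _ => (Nat.card_eq_fintype_card).symm

noncomputable def pairEquiv (s : Fin m → ℕ) (P Q : Finset Blk → Prop)
    (d : Option (Fin m) →₀ ℕ) :
    wtX s P Q d ≃ Σ p : ↥(Finset.HasAntidiagonal.antidiagonal d), (wtA s P p.1.1 × wtA s Q p.1.2) := by
  refine (Equiv.sigmaFiberEquiv (fun x : wtX s P Q d =>
    (⟨(wt s x.1.1, wt s x.1.2), Finset.HasAntidiagonal.mem_antidiagonal.mpr x.2.2.2⟩ :
      ↥(Finset.HasAntidiagonal.antidiagonal d)))).symm.trans (Equiv.sigmaCongrRight fun p => ?_)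
  refine ⟨fun x => (⟨x.1.1.1, x.1.2.1, ?_⟩, ⟨x.1.1.2, x.1.2.2.1, ?_⟩),
    fun y => ⟨⟨(y.1.1, y.2.1), y.1.2.1, y.2.2.1, ?_⟩, ?_⟩, fun x => ?_, fun y => ?_⟩
  · exact congrArg (fun y : ↥(Finset.HasAntidiagonal.antidiagonal d) => y.1.1) x.2
  · exact congrArg (fun y : ↥(Finset.HasAntidiagonal.antidiagonal d) => y.1.2) x.2
  · rw [y.1.2.2, y.2.2.2]
    exact Finset.HasAntidiagonal.mem_antidiagonal.mp p.2
  · apply Subtype.ext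
    show (wt s y.1.1, wt s y.2.1) = p.1
    rw [y.1.2.2, y.2.2.2]
  · apply Subtype.ext
    apply Subtype.ext
    rfl
  · rcases y with ⟨⟨T1, h1⟩, ⟨T2, h2⟩⟩
    rfl

lemma finite_wtX (P Q : Finset Blk → Prop) (hP : ∀ T, P T → IsConfig s 1 T)
    (hQ : ∀ T, Q T → IsConfig s 1 T) (d : Option (Fin m) →₀ ℕ) :
    Finite (wtX s P Q d) := by
  letI h1 : ∀ e, Finite (wtA s P e) := finite_wtA P hP
  letI h2 : ∀ e, Finite (wtA s Q e) := finite_wtA Q hQ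
  exact Finite.of_equiv _ (pairEquiv s P Q d).symm

lemma card_wtX (P Q : Finset Blk → Prop) (hP : ∀ T, P T → IsConfig s 1 T)
    (hQ : ∀ T, Q T → IsConfig s 1 T) (d : Option (Fin m) →₀ ℕ) :
    Nat.card (wtX s P Q d) = ∑ p ∈ Finset.HasAntidiagonal.antidiagonal d,
      Nat.card (wtA s P p.1) * Nat.card (wtA s Q p.2) := by
  letI h1 : ∀ e, Finite (wtA s P e) := finite_wtA P hP
  letI h2 : ∀ e, Finite (wtA s Q e) := finite_wtA Q hQ
  rw [Nat.card_congr (pairEquiv s P Q d), nat_card_sigma]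
  rw [← Finset.sum_coe_sort (Finset.HasAntidiagonal.antidiagonal d)
    (fun p => Nat.card (wtA s P p.1) * Nat.card (wtA s Q p.2))]
  exact Finset.sum_congr rfl fun p _ => Nat.card_prod _ _

lemma coeff_mul_card (P Q : Finset Blk → Prop) (hP : ∀ T, P T → IsConfig s 1 T)
    (hQ : ∀ T, Q T → IsConfig s 1 T) (d : Option (Fin m) →₀ ℕ) :
    MvPowerSeries.coeff d (gf s P * gf s Q) = (Nat.card (wtX s P Q d) : ℚ) := by
  rw [MvPowerSeries.coeff_mul, card_wtX P Q hP hQ d]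
  push_cast
  apply Finset.sum_congr rfl
  intro p _
  rw [show MvPowerSeries.coeff p.1 (gf s P) = gf s P p.1 from rfl,
    show MvPowerSeries.coeff p.2 (gf s Q) = gf s Q p.2 from rfl,
    gf_eq_card P p.1, gf_eq_card Q p.2]

end GF

/-! ## the main bijection and the theorem -/

section Main

variable {s : Fin m → ℕ}

noncomputable def fwd (hpos : ∀ i, 0 < s i) (d : Option (Fin m) →₀ ℕ)
    (x : wtX s (fun T => IsConfig s 1 T)
      (fun T => IsTower s T ∧ bottomCount T = 1 ∧ leftFree T) d) :
    wtA s (fun T => IsTower s T ∧ bottomCount T = 1) d ⊕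
      wtX s (fun T => IsTower s T ∧ bottomCount T = 1 ∧ leftFree T)
        (fun T => IsTower s T ∧ bottomCount T = 1) d :=
  if h : ∀ b ∈ x.1.1, b.height = 0 → b.left < 0 then
    Sum.inl ⟨mergeT x.1.2 x.1.1,
      Wpred_mergeT hpos x.2.2.1 ⟨x.2.1, h⟩,
      by rw [wt_merge hpos x.2.2.1 ⟨x.2.1, h⟩, add_comm]; exact x.2.2.2⟩
  else
    Sum.inr ⟨(x.1.2, x.1.1), x.2.2.1, (Wpred_iff hpos).mpr ⟨x.2.1, h⟩,
      by rw [add_comm]; exact x.2.2.2⟩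

noncomputable def bwd (hpos : ∀ i, 0 < s i) (d : Option (Fin m) →₀ ℕ)
    (y : wtA s (fun T => IsTower s T ∧ bottomCount T = 1) d ⊕
      wtX s (fun T => IsTower s T ∧ bottomCount T = 1 ∧ leftFree T)
        (fun T => IsTower s T ∧ bottomCount T = 1) d) :
    wtX s (fun T => IsConfig s 1 T)
      (fun T => IsTower s T ∧ bottomCount T = 1 ∧ leftFree T) d :=
  match y with
  | Sum.inl z =>
      ⟨(Ctil z.1, Dpart z.1),
        (Lpred_Ctil hpos ((Wpred_iff hpos).mp z.2.1).1).1,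
        Upred_Dpart hpos z.2.1,
        by rw [add_comm, wt_split hpos ((Wpred_iff hpos).mp z.2.1).1]; exact z.2.2⟩
  | Sum.inr z =>
      ⟨(z.1.2, z.1.1), ((Wpred_iff hpos).mp z.2.2.1).1, z.2.1,
        by rw [add_comm]; exact z.2.2.2⟩

lemma bwd_fwd (hpos : ∀ i, 0 < s i) (d : Option (Fin m) →₀ ℕ) (x) :
    bwd hpos d (fwd hpos d x) = x := by
  unfold fwd
  by_cases h : ∀ b ∈ x.1.1, b.height = 0 → b.left < 0
  · rw [dif_pos h]
    have hL : Lpred s x.1.1 := ⟨x.2.1, h⟩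
    have hU : Upred s x.1.2 := x.2.2.1
    apply Subtype.ext
    show (Ctil (mergeT x.1.2 x.1.1), Dpart (mergeT x.1.2 x.1.1)) = x.1
    have h1 : Ctil (mergeT x.1.2 x.1.1) = x.1.1 := Ctil_mergeT hpos hU hL
    have h2 : Dpart (mergeT x.1.2 x.1.1) = x.1.2 := Dpart_mergeT hpos hU hL
    rw [h1, h2]
  · rw [dif_neg h]
    apply Subtype.ext
    rfl

lemma fwd_bwd (hpos : ∀ i, 0 < s i) (d : Option (Fin m) →₀ ℕ) (y) :
    fwd hpos d (bwd hpos d y) = y := by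
  match y with
  | Sum.inl z =>
      have hW : Wpred s z.1 := z.2.1
      have hconf : IsConfig s 1 z.1 := ((Wpred_iff hpos).mp hW).1
      have hcond : ∀ b ∈ Ctil z.1, b.height = 0 → b.left < 0 :=
        (Lpred_Ctil hpos hconf).2
      unfold fwd bwd
      rw [dif_pos hcond]
      exact congrArg Sum.inl (Subtype.ext (mergeT_split hpos hW))
  | Sum.inr z =>
      have hB : Wpred s z.1.2 := z.2.2.1
      have hcond : ¬ ∀ b ∈ z.1.2, b.height = 0 → b.left < 0 :=
        ((Wpred_iff hpos).mp hB).2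
      unfold fwd bwd
      rw [dif_neg hcond]
      exact congrArg Sum.inr (Subtype.ext rfl)

lemma card_main (hpos : ∀ i, 0 < s i) (d : Option (Fin m) →₀ ℕ) :
    Nat.card (wtX s (fun T => IsConfig s 1 T)
        (fun T => IsTower s T ∧ bottomCount T = 1 ∧ leftFree T) d) =
      Nat.card (wtA s (fun T => IsTower s T ∧ bottomCount T = 1) d) +
        Nat.card (wtX s (fun T => IsTower s T ∧ bottomCount T = 1 ∧ leftFree T)
          (fun T => IsTower s T ∧ bottomCount T = 1) d) := by
  have hWimp : ∀ T, (IsTower s T ∧ bottomCount T = 1) → IsConfig s 1 T :=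
    fun T hT => ((Wpred_iff hpos).mp hT).1
  have hUimp : ∀ T, (IsTower s T ∧ bottomCount T = 1 ∧ leftFree T) → IsConfig s 1 T :=
    fun T hT => hWimp T ⟨hT.1, hT.2.1⟩
  haveI : Finite (wtA s (fun T => IsTower s T ∧ bottomCount T = 1) d) :=
    finite_wtA _ hWimp d
  haveI : Finite (wtX s (fun T => IsTower s T ∧ bottomCount T = 1 ∧ leftFree T)
      (fun T => IsTower s T ∧ bottomCount T = 1) d) :=
    finite_wtX _ _ hUimp hWimp d
  rw [Nat.card_congr (⟨fwd hpos d, bwd hpos d, bwd_fwd hpos d, fwd_bwd hpos d⟩ :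
    wtX s (fun T => IsConfig s 1 T)
      (fun T => IsTower s T ∧ bottomCount T = 1 ∧ leftFree T) d ≃ _), Nat.card_sum]

lemma coeff_gf (P : Finset Blk → Prop) (d : Option (Fin m) →₀ ℕ) :
    MvPowerSeries.coeff d (gf s P) = (Nat.card (wtA s P d) : ℚ) := gf_eq_card P d

end Main

end OminoProof

/-- `(1 + U) · W_1 = V_1 · U` in `ℚ[[x, y_1, …, y_m]]`. -/

theorem gf_W1_V1_U {m : ℕ} (s : Fin m → ℕ) (hpos : ∀ i, 0 < s i)
    (hinj : Function.Injective s) :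
    (1 + Ugf s) * Wgf s 1 = Vgf s 1 * Ugf s := by
  open OminoProof in
  apply MvPowerSeries.ext
  intro d
  have hWimp : ∀ T, (IsTower s T ∧ bottomCount T = 1) → IsConfig s 1 T :=
    fun T hT => ((Wpred_iff hpos).mp hT).1
  have hUimp : ∀ T, (IsTower s T ∧ bottomCount T = 1 ∧ leftFree T) → IsConfig s 1 T :=
    fun T hT => hWimp T ⟨hT.1, hT.2.1⟩
  have hVimp : ∀ T, IsConfig s 1 T → IsConfig s 1 T := fun T h => h
  rw [add_mul, one_mul, map_add]
  simp only [Ugf, Wgf, Vgf]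
  rw [coeff_gf, coeff_mul_card _ _ hUimp hWimp d, coeff_mul_card _ _ hVimp hUimp d]
  have := card_main hpos d
  push_cast
  exact_mod_cast this.symm
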